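/- Let G be a finite group of local characteristic p-type and R a nontrivial p-radical subgroup of G. Then for any Sylow p-subgroup S of G containing R, Z(S) ≤ Z(R); in particular R is distinguished. -/

import Mathlib

/-- The center of a subgroup `P`, viewed as a subgroup of the ambient group `G`. -/
def ZS {G : Type*} [Group G] (P : Subgroup G) : Subgroup G :=
  Subgroup.centralizer (P : Set G) ⊓ P

/-- The largest normal `p`-subgroup `O_p(H)` of a subgroup `H ≤ G`, as the join of all
normal `p`-subgroups of `H`. -/
def pCore (p : ℕ) {G : Type*} [Group G] (H : Subgroup G) : Subgroup G :=
  ⨆ Q ∈ {Q : Subgroup G | Q ≤ H ∧ IsPGroup p ↥Q ∧ ∀ h ∈ H, ∀ x ∈ Q, h * x * h⁻¹ ∈ Q}, Q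

/-- If `G` is of local characteristic `p`-type and `R` is a nontrivial `p`-radical
subgroup, then for any Sylow `p`-subgroup `S` containing `R` we have `Z(S) ≤ Z(R)`;
in particular `R` is distinguished. -/
theorem stmt3 {G : Type*} [Group G] [Fintype G] {p : ℕ} [Fact p.Prime]
    (hChar : ∀ Q : Subgroup G, Q ≠ ⊥ → IsPGroup p ↥Q →
      Subgroup.centralizer ((pCore p (Subgroup.normalizer (Q : Set G)) : Subgroup G) : Set G) ⊓ Subgroup.normalizer (Q : Set G) ≤
        pCore p (Subgroup.normalizer (Q : Set G)))
    (R : Subgroup G) (hR : IsPGroup p ↥R) (hne : R ≠ ⊥)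
    (hrad : R = pCore p (Subgroup.normalizer (R : Set G)))
    (S : Sylow p G) (hRS : R ≤ (S : Subgroup G)) :
    ZS (S : Subgroup G) ≤ ZS R ∧
      ∃ x ∈ ZS R, x ≠ 1 ∧ ∃ T : Sylow p G, x ∈ ZS (T : Subgroup G) := by
  -- Z(S) centralizes R (since R ≤ S)
  have hcent : ZS (S : Subgroup G) ≤ Subgroup.centralizer (R : Set G) :=
    le_trans inf_le_left (Subgroup.centralizer_le hRS)
  -- centralizer R ≤ normalizer R
  have hCN : Subgroup.centralizer (R : Set G) ≤ Subgroup.normalizer (R : Set G) := by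
    intro x hx
    rw [Subgroup.mem_normalizer_iff]
    intro r
    constructor
    · intro hr
      have := hx r hr
      have : x * r * x⁻¹ = r := by
        rw [← this]; group
      rw [this]; exact hr
    · intro hr
      have hr' : x * r * x⁻¹ ∈ R := hr
      have key : ∀ y ∈ R, x * y * x⁻¹ = y := by
        intro y hy
        have := hx y hy
        rw [← this]; group
      have := key _ hr'
      have hxx : x * (x * r * x⁻¹) * x⁻¹ = x * r * x⁻¹ := this
      have : x⁻¹ ∈ Subgroup.centralizer (R : Set G) :=
        (Subgroup.centralizer (R : Set G)).inv_mem hx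
      have := this _ hr'
      -- (x*r*x⁻¹) * x⁻¹ = x⁻¹ * (x*r*x⁻¹)  →  r = x⁻¹ * (x*r*x⁻¹) * x
      have hre : r = x⁻¹ * (x * r * x⁻¹) * x := by group
      rw [hre, ← this]
      convert hr' using 1
      group
  -- Z(S) ≤ R via hChar
  have hZR : ZS (S : Subgroup G) ≤ R := by
    intro x hx
    have h1 : x ∈ Subgroup.centralizer ((pCore p (Subgroup.normalizer (R : Set G)) : Subgroup G) : Set G)
        ⊓ Subgroup.normalizer (R : Set G) := by
      constructor
      · rw [← hrad]; exact hcent hx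
      · exact hCN (hcent hx)
    have := hChar R hne hR h1
    rw [← hrad] at this
    exact this
  have hmain : ZS (S : Subgroup G) ≤ ZS R := le_inf hcent hZR
  refine ⟨hmain, ?_⟩
  -- S is a nontrivial finite p-group, so its center is nontrivial
  obtain ⟨r, hrR, hr1⟩ := (Subgroup.nontrivial_iff_exists_ne_one R).mp
    ((Subgroup.nontrivial_iff_ne_bot R).mpr hne)
  haveI : Nontrivial ↥(S : Subgroup G) :=
    ⟨⟨⟨r, hRS hrR⟩, 1, by simp [Subtype.ext_iff, hr1]⟩⟩
  haveI := IsPGroup.center_nontrivial S.isPGroup'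
  obtain ⟨⟨z, hz⟩, hzne⟩ := exists_ne (1 : Subgroup.center ↥(S : Subgroup G))
  have hz1 : (z : G) ≠ 1 := by
    intro h
    apply hzne
    ext
    simpa using h
  have hzZS : (z : G) ∈ ZS (S : Subgroup G) := by
    constructor
    · intro g hg
      have := (Subgroup.mem_center_iff.mp hz) ⟨g, hg⟩
      exact congrArg Subtype.val this
    · exact z.2
  exact ⟨z, hmain hzZS, hz1, S, hzZS⟩
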